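/- Let ω, Δ, g be real numbers with ω ≠ 0, set s = √(((ω+Δ)/2)² + g²), and let U(t) = exp((iωt/2)σz) · exp(−it(((ω+Δ)/2)σz + g σx)). Then the spectrum (set of eigenvalues) of the 2×2 matrix U(2π/ω) equals { exp(−i(2π/ω)(ω/2 + s)), exp(−i(2π/ω)(ω/2 − s)) }; consequently the quasi-energies of the corresponding periodic Hamiltonian are ±(ω/2 − √(((ω+Δ)/2)² + g²)) modulo ω. -/

import Mathlib

open Matrix Complex
open scoped Matrix.Norms.L2Operator

/-- Let `ω ≠ 0`, `s = √(((ω+Δ)/2)² + g²)` and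
`U(t) = exp((iωt/2)σz) ⬝ exp(-it(((ω+Δ)/2)σz + gσx))`. Then the spectrum of the
monodromy matrix `U(2π/ω)` equals `{exp(-i(2π/ω)(ω/2+s)), exp(-i(2π/ω)(ω/2-s))}`;
consequently every eigenvalue is of the form `exp(-i(2π/ω)ε)` with quasi-energy
`ε = ±(ω/2 - s)` modulo `ω`. -/

lemma spec2 (B : Matrix (Fin 2) (Fin 2) ℂ) (μ₁ μ₂ : ℂ)
    (htr : B.trace = μ₁ + μ₂) (hdet : B.det = μ₁ * μ₂) :
    spectrum ℂ B = {μ₁, μ₂} := by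
  rw [Matrix.trace_fin_two] at htr
  rw [Matrix.det_fin_two] at hdet
  ext lam
  rw [spectrum.mem_iff, Matrix.isUnit_iff_isUnit_det, isUnit_iff_ne_zero, not_not,
    Matrix.det_fin_two]
  have e1 : (algebraMap ℂ (Matrix (Fin 2) (Fin 2) ℂ) lam - B) 0 0 = lam - B 0 0 := by
    simp [Matrix.algebraMap_matrix_apply]
  have e2 : (algebraMap ℂ (Matrix (Fin 2) (Fin 2) ℂ) lam - B) 1 1 = lam - B 1 1 := by
    simp [Matrix.algebraMap_matrix_apply]
  have e3 : (algebraMap ℂ (Matrix (Fin 2) (Fin 2) ℂ) lam - B) 0 1 = - B 0 1 := by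
    simp [Matrix.algebraMap_matrix_apply]
  have e4 : (algebraMap ℂ (Matrix (Fin 2) (Fin 2) ℂ) lam - B) 1 0 = - B 1 0 := by
    simp [Matrix.algebraMap_matrix_apply]
  rw [e1, e2, e3, e4]
  have key : (lam - B 0 0) * (lam - B 1 1) - (-B 0 1) * (-B 1 0) = (lam - μ₁) * (lam - μ₂) := by
    have h5 : (lam - B 0 0) * (lam - B 1 1) - (-B 0 1) * (-B 1 0)
        = lam^2 - (B 0 0 + B 1 1) * lam + (B 0 0 * B 1 1 - B 0 1 * B 1 0) := by ring
    rw [h5, htr, hdet]; ring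
  rw [key, mul_eq_zero, sub_eq_zero, sub_eq_zero]
  simp [Set.mem_insert_iff]

lemma specConj (P : Matrix (Fin 2) (Fin 2) ℂ) (hP : IsUnit P.det) (e₁ e₂ : ℂ) :
    spectrum ℂ ((-1 : Matrix (Fin 2) (Fin 2) ℂ) * (P * Matrix.diagonal ![e₁, e₂] * P⁻¹))
      = {-e₁, -e₂} := by
  apply spec2
  · rw [neg_one_mul, Matrix.trace_neg, Matrix.trace_mul_comm (P * _) P⁻¹, ← Matrix.mul_assoc,
      Matrix.nonsing_inv_mul _ hP, Matrix.one_mul, Matrix.trace_diagonal, Fin.sum_univ_two]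
    simp only [Matrix.cons_val_zero, Matrix.cons_val_one, Matrix.head_cons]
    ring
  · rw [Matrix.det_mul, Matrix.det_mul, Matrix.det_mul, Matrix.det_nonsing_inv,
      Ring.inverse_eq_inv']
    rw [mul_comm P.det _, mul_assoc, mul_inv_cancel₀ hP.ne_zero, mul_one]
    rw [Matrix.det_neg, Matrix.det_diagonal, Fin.prod_univ_two]
    simp only [Matrix.cons_val_zero, Matrix.cons_val_one, Matrix.head_cons, Matrix.det_one,
      Fintype.card_fin]
    ring

lemma conjKey (c hC gC sC : ℂ) (hs2 : sC ^ 2 = hC ^ 2 + gC ^ 2) :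
    (!![c * hC, c * gC; c * gC, -(c * hC)] : Matrix (Fin 2) (Fin 2) ℂ) *
      !![gC, gC; sC - hC, -(sC + hC)]
    = !![gC, gC; sC - hC, -(sC + hC)] * Matrix.diagonal ![c * sC, -(c * sC)] := by
  ext i j
  fin_cases i <;> fin_cases j <;>
    simp [Matrix.mul_apply, Fin.sum_univ_two, Matrix.diagonal] <;>
    first
      | linear_combination c * hs2
      | linear_combination (-c) * hs2
      | ring

lemma expPi (x y : ℂ) :
    NormedSpace.exp (![x, y] : Fin 2 → ℂ) = ![Complex.exp x, Complex.exp y] := by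
  ext i
  fin_cases i <;> simp [Pi.exp_def, ← congrFun Complex.exp_eq_exp_ℂ]


theorem stmt19 (ω Δ g : ℝ) (hω : ω ≠ 0)
    (σx σz : Matrix (Fin 2) (Fin 2) ℂ)
    (hx : σx = !![0, 1; 1, 0]) (hz : σz = !![1, 0; 0, -1])
    (s : ℝ) (hs : s = Real.sqrt (((ω + Δ) / 2) ^ 2 + g ^ 2))
    (U : ℝ → Matrix (Fin 2) (Fin 2) ℂ)
    (hU : U = fun (t : ℝ) => NormedSpace.exp ((I * ω * (t : ℂ) / 2) • σz) *
      NormedSpace.exp ((-(I * (t : ℂ))) • ((((ω : ℂ) + Δ) / 2) • σz + (g : ℂ) • σx))) :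
    spectrum ℂ (U (2 * Real.pi / ω)) =
      {Complex.exp (-I * (2 * Real.pi / ω) * ((ω : ℂ) / 2 + (s : ℂ))),
        Complex.exp (-I * (2 * Real.pi / ω) * ((ω : ℂ) / 2 - (s : ℂ)))} ∧
      ∀ μ ∈ spectrum ℂ (U (2 * Real.pi / ω)), ∃ k : ℤ,
        μ = Complex.exp (-I * (2 * Real.pi / ω) * (((ω : ℂ) / 2 - (s : ℂ)) + (k : ℂ) * ω)) ∨
        μ = Complex.exp (-I * (2 * Real.pi / ω) * (-((ω : ℂ) / 2 - (s : ℂ)) + (k : ℂ) * ω)) := by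
  subst hx hz hU
  beta_reduce
  have hωC : (ω : ℂ) ≠ 0 := by exact_mod_cast hω
  set T : ℝ := 2 * Real.pi / ω with hT
  have hTC : (T : ℂ) = 2 * (Real.pi : ℂ) / (ω : ℂ) := by rw [hT]; push_cast; ring
  have hTω : (T : ℂ) * (ω : ℂ) = 2 * Real.pi := by rw [hTC]; field_simp
  set a : ℂ := -(I * (T : ℂ) * (s : ℂ)) with ha
  have hμ1 : Complex.exp (-I * (T : ℂ) * ((ω : ℂ)/2 + (s : ℂ))) = -Complex.exp a := by
    have h1 : -I * (T : ℂ) * ((ω : ℂ)/2 + (s : ℂ)) = -((Real.pi : ℂ) * I) + a := by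
      rw [ha]; linear_combination (-(I/2)) * hTω
    rw [h1, Complex.exp_add, Complex.exp_neg, Complex.exp_pi_mul_I]
    norm_num
  have hμ2 : Complex.exp (-I * (T : ℂ) * ((ω : ℂ)/2 - (s : ℂ))) = -Complex.exp (-a) := by
    have h1 : -I * (T : ℂ) * ((ω : ℂ)/2 - (s : ℂ)) = -((Real.pi : ℂ) * I) + -a := by
      rw [ha]; linear_combination (-(I/2)) * hTω
    rw [h1, Complex.exp_add, Complex.exp_neg, Complex.exp_pi_mul_I]
    norm_num
  have hfirst : NormedSpace.exp ((I * (ω : ℂ) * (T : ℂ) / 2) •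
      (!![1,0;0,-1] : Matrix (Fin 2) (Fin 2) ℂ)) = -1 := by
    have harg : I * (ω : ℂ) * (T : ℂ) / 2 = I * Real.pi := by
      linear_combination (I/2) * hTω
    rw [harg]
    have h : (I * (Real.pi : ℂ)) • (!![1,0;0,-1] : Matrix (Fin 2) (Fin 2) ℂ)
        = Matrix.diagonal ![I * Real.pi, -(I * Real.pi)] := by
      ext i j; fin_cases i <;> fin_cases j <;> simp [Matrix.diagonal]
    rw [h, Matrix.exp_diagonal, expPi]
    have h2 : Complex.exp (I * Real.pi) = -1 := by
      rw [show (I * (Real.pi : ℂ)) = Real.pi * I by ring, Complex.exp_pi_mul_I]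
    have h3 : Complex.exp (-(I * Real.pi)) = -1 := by
      rw [Complex.exp_neg, h2]; norm_num
    rw [h2, h3]
    ext i j; fin_cases i <;> fin_cases j <;> simp [Matrix.diagonal]
  set c : ℂ := -(I * (T : ℂ)) with hc
  set hC : ℂ := ((ω : ℂ) + (Δ : ℂ))/2 with hhC
  have hHmat : (c • (hC • (!![1,0;0,-1] : Matrix (Fin 2) (Fin 2) ℂ)
        + (g : ℂ) • (!![0,1;1,0] : Matrix (Fin 2) (Fin 2) ℂ)))
      = !![c * hC, c * g; c * g, -(c * hC)] := by
    ext i j; fin_cases i <;> fin_cases j <;> simp <;> ring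
  have hsnn : 0 ≤ s := by rw [hs]; exact Real.sqrt_nonneg _
  have hs2R : s ^ 2 = ((ω + Δ)/2) ^ 2 + g ^ 2 := by
    rw [hs]; exact Real.sq_sqrt (by positivity)
  have hs2 : (s : ℂ) ^ 2 = hC ^ 2 + (g : ℂ) ^ 2 := by
    rw [hhC]; exact_mod_cast hs2R
  have hca : c * (s : ℂ) = a := by rw [hc, ha]; ring
  have hspec : spectrum ℂ (NormedSpace.exp ((I * (ω : ℂ) * (T : ℂ) / 2) •
        (!![1,0;0,-1] : Matrix (Fin 2) (Fin 2) ℂ)) *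
      NormedSpace.exp (c • (hC • (!![1,0;0,-1] : Matrix (Fin 2) (Fin 2) ℂ)
        + (g : ℂ) • (!![0,1;1,0] : Matrix (Fin 2) (Fin 2) ℂ))))
      = {-Complex.exp a, -Complex.exp (-a)} := by
    rw [hHmat]
    by_cases hg0 : g = 0
    · -- diagonal case
      have hd : (!![c * hC, c * (g : ℂ); c * (g : ℂ), -(c * hC)] : Matrix (Fin 2) (Fin 2) ℂ)
          = Matrix.diagonal ![c * hC, -(c * hC)] := by
        ext i j; fin_cases i <;> fin_cases j <;> simp [Matrix.diagonal, hg0]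
      rw [hd, Matrix.exp_diagonal, expPi, hfirst]
      have h1 : (-1 : Matrix (Fin 2) (Fin 2) ℂ) *
            Matrix.diagonal ![Complex.exp (c * hC), Complex.exp (-(c * hC))] =
          (-1 : Matrix (Fin 2) (Fin 2) ℂ) *
            ((1 : Matrix (Fin 2) (Fin 2) ℂ) *
              Matrix.diagonal ![Complex.exp (c * hC), Complex.exp (-(c * hC))] *
              (1 : Matrix (Fin 2) (Fin 2) ℂ)⁻¹) := by
        simp
      rw [h1, specConj 1 (by simp)]
      -- now identify {-exp(c hC), -exp(-(c hC))} with {-exp a, -exp(-a)}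
      have hcases : (ω + Δ)/2 = s ∨ (ω + Δ)/2 = -s := by
        have hz : ((ω + Δ)/2 - s) * ((ω + Δ)/2 + s) = 0 := by
          have : g ^ 2 = 0 := by rw [hg0]; ring
          nlinarith [hs2R]
        rcases mul_eq_zero.mp hz with h | h
        · left; linarith
        · right; linarith
      have hhR : hC = (((ω + Δ)/2 : ℝ) : ℂ) := by rw [hhC]; push_cast; ring
      rcases hcases with h | h
      · have h5 : c * hC = a := by rw [hhR, h]; exact_mod_cast hca
        rw [h5]
      · have h5 : c * hC = -a := by
          rw [hhR, h]; push_cast; linear_combination -hca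
        rw [h5, neg_neg, Set.pair_comm]
    · -- off-diagonal case: conjugate to a diagonal matrix
      have hgC : (g : ℂ) ≠ 0 := by exact_mod_cast hg0
      have hspos : 0 < s := by
        rcases lt_or_eq_of_le hsnn with h | h
        · exact h
        · exfalso
          have hg2 : 0 < g ^ 2 := by positivity
          nlinarith [sq_nonneg ((ω + Δ)/2)]
      have hsC : (s : ℂ) ≠ 0 := by exact_mod_cast hspos.ne'
      set P : Matrix (Fin 2) (Fin 2) ℂ :=
        !![(g : ℂ), (g : ℂ); (s : ℂ) - hC, -((s : ℂ) + hC)] with hP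
      have hdetP : P.det = -(2 * g * s) := by
        rw [hP, Matrix.det_fin_two_of]; ring
      have hPu : IsUnit P.det := by
        rw [hdetP, isUnit_iff_ne_zero]
        intro h
        apply hgC
        have h2 : (2 : ℂ) * g * s = 0 := by linear_combination -h
        rcases mul_eq_zero.mp h2 with h3 | h3
        · rcases mul_eq_zero.mp h3 with h4 | h4
          · norm_num at h4
          · exact h4
        · exact absurd h3 hsC
      set D : Matrix (Fin 2) (Fin 2) ℂ := Matrix.diagonal ![a, -a] with hD
      have hmul : (!![c * hC, c * g; c * g, -(c * hC)] : Matrix (Fin 2) (Fin 2) ℂ) * P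
          = P * D := by
        rw [hP, hD, ← hca]
        exact conjKey c hC g s hs2
      have hkey : (!![c * hC, c * g; c * g, -(c * hC)] : Matrix (Fin 2) (Fin 2) ℂ)
          = P * D * P⁻¹ := by
        rw [← hmul, Matrix.mul_assoc, Matrix.mul_nonsing_inv _ hPu, Matrix.mul_one]
      rw [hkey, Matrix.exp_conj P D ((Matrix.isUnit_iff_isUnit_det P).mpr hPu), hD,
        Matrix.exp_diagonal, expPi, hfirst]
      exact specConj P hPu _ _
  constructor
  · simp only [← hTC]
    rw [hspec, hμ1, hμ2]
  · intro μ hμ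
    rw [hspec] at hμ
    simp only [← hTC]
    rcases Set.mem_insert_iff.mp hμ with h | h
    · refine ⟨1, Or.inr ?_⟩
      rw [h, ← hμ1]
      apply congrArg
      push_cast
      ring
    · refine ⟨0, Or.inl ?_⟩
      rw [Set.mem_singleton_iff.mp h, ← hμ2]
      apply congrArg
      push_cast
      ring
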